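/- For semirings R and S, rad_m(R × S) = rad_m(R) × rad_m(S), where rad_m of a semiring T is the intersection of all m-regular right congruences on T (taken to be ∇_T if there are none). -/

import Mathlib

universe u

section Defs

variable (S : Type u) [NonUnitalSemiring S]

structure IsRightAction (M : Type u) [AddCommMonoid M] (act : M → S → M) : Prop where
  add_act : ∀ (m₁ m₂ : M) (s : S), act (m₁ + m₂) s = act m₁ s + act m₂ s
  act_add : ∀ (m : M) (s₁ s₂ : S), act m (s₁ + s₂) = act m s₁ + act m s₂
  act_mul : ∀ (m : M) (s₁ s₂ : S), act m (s₁ * s₂) = act (act m s₁) s₂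
  act_zero : ∀ m : M, act m (0 : S) = 0
  zero_act : ∀ s : S, act (0 : M) s = 0

def IsSubsemimodule (M : Type u) [AddCommMonoid M] (act : M → S → M) (N : Set M) : Prop :=
  (0 : M) ∈ N ∧ (∀ x ∈ N, ∀ y ∈ N, x + y ∈ N) ∧ (∀ x ∈ N, ∀ s : S, act x s ∈ N)

def IsMinimal (M : Type u) [AddCommMonoid M] (act : M → S → M) : Prop :=
  (∃ (m : M) (s : S), act m s ≠ 0) ∧
    ∀ N : Set M, IsSubsemimodule S M act N → N = {(0 : M)} ∨ N = Set.univ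

def IsSemimoduleCong (M : Type u) [AddCommMonoid M] (act : M → S → M)
    (r : M → M → Prop) : Prop :=
  Equivalence r ∧ (∀ a b c : M, r a b → r (a + c) (b + c)) ∧
    (∀ (a b : M) (s : S), r a b → r (act a s) (act b s))

def IsSimple (M : Type u) [AddCommMonoid M] (act : M → S → M) : Prop :=
  IsMinimal S M act ∧ ∀ r : M → M → Prop, IsSemimoduleCong S M act r →
    (∀ a b, r a b → a = b) ∨ (∀ a b, r a b)

def IsRightCongruence (ρ : S → S → Prop) : Prop :=
  Equivalence ρ ∧ (∀ a b c : S, ρ a b → ρ (a + c) (b + c)) ∧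
    (∀ a b c : S, ρ a b → ρ (a * c) (b * c))

def IsCongruence (ρ : S → S → Prop) : Prop :=
  IsRightCongruence S ρ ∧ ∀ a b c : S, ρ a b → ρ (c * a) (c * b)

def IsRegularCong (ρ : S → S → Prop) : Prop := ∃ e : S, ∀ s : S, ρ (e * s) s

def IsRightIdeal (I : Set S) : Prop :=
  (0 : S) ∈ I ∧ (∀ x ∈ I, ∀ y ∈ I, x + y ∈ I) ∧ ∀ x ∈ I, ∀ s : S, x * s ∈ I

def IsSaturated (ρ : S → S → Prop) (I : Set S) : Prop := ∀ s i : S, i ∈ I → ρ s i → s ∈ I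

def IsMaximalSaturatedRightIdeal (ρ : S → S → Prop) (I : Set S) : Prop :=
  IsRightIdeal S I ∧ IsSaturated S ρ I ∧ I ≠ Set.univ ∧
    ∀ J : Set S, IsRightIdeal S J → IsSaturated S ρ J → I ⊆ J → J = I ∨ J = Set.univ

def zeroClass (ρ : S → S → Prop) : Set S := {s : S | ρ s 0}

def IsMRegular (ρ : S → S → Prop) : Prop :=
  IsRightCongruence S ρ ∧ IsRegularCong S ρ ∧
    IsMaximalSaturatedRightIdeal S ρ (zeroClass S ρ)

def IsMaximalRightCongruence (ρ : S → S → Prop) : Prop :=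
  IsRightCongruence S ρ ∧ (∃ a b : S, ¬ ρ a b) ∧
    ∀ τ : S → S → Prop, IsRightCongruence S τ → (∀ a b, ρ a b → τ a b) →
      (∀ a b, τ a b ↔ ρ a b) ∨ (∀ a b, τ a b)

/-- `φ : S → M` realizes `M` as the quotient right `S`-semimodule `S/μ`. -/
def IsQuotientModel (μ : S → S → Prop) (M : Type u) [AddCommMonoid M]
    (act : M → S → M) (φ : S → M) : Prop :=
  Function.Surjective φ ∧ (∀ a b : S, φ (a + b) = φ a + φ b) ∧ φ 0 = 0 ∧
    (∀ (a : S) (s : S), φ (a * s) = act (φ a) s) ∧ ∀ a b : S, φ a = φ b ↔ μ a b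

end Defs

/-- The m-radical of a semiring `T`, as the intersection of all m-regular right
congruences on `T` (the full relation if there are none). -/
def radm (T : Type u) [NonUnitalSemiring T] : T → T → Prop :=
  fun a b => ∀ ρ : T → T → Prop, IsMRegular T ρ → ρ a b

section Aux

variable {R S : Type u} [NonUnitalSemiring R] [NonUnitalSemiring S]

/-- Lift an m-regular congruence on `R` to `R × S` via the first component. -/
lemma lift_fst {σ : R → R → Prop} (h : IsMRegular R σ) :
    IsMRegular (R × S) (fun a b => σ a.1 b.1) := by
  obtain ⟨⟨heq, hadd, hmul⟩, ⟨e, he⟩, ⟨hz, haddI, hmulI⟩, hsat, hne, hmax⟩ := h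
  refine ⟨⟨⟨fun a => heq.refl a.1, fun h => heq.symm h, fun h h' => heq.trans h h'⟩,
      fun a b c hab => by simpa using hadd a.1 b.1 c.1 hab,
      fun a b c hab => by simpa using hmul a.1 b.1 c.1 hab⟩,
    ⟨(e, 0), fun s => by simpa using he s.1⟩, ?_, ?_, ?_, ?_⟩
  · exact ⟨hz, fun x hx y hy => haddI x.1 hx y.1 hy, fun x hx s => hmulI x.1 hx s.1⟩
  · exact fun x i hi hxi => hsat x.1 i.1 hi hxi
  · intro hu
    apply hne
    ext r
    simp only [Set.mem_univ, iff_true]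
    have : (r, (0 : S)) ∈ (Set.univ : Set (R × S)) := Set.mem_univ _
    rw [← hu] at this
    exact this
  · intro J hJid hJsat hsub
    set J₁ : Set R := {r | (r, (0 : S)) ∈ J} with hJ₁
    have hmem : ∀ x : R × S, x ∈ J ↔ x.1 ∈ J₁ := by
      intro x
      constructor
      · intro hx
        exact hJsat (x.1, 0) x hx (heq.refl x.1)
      · intro hx
        exact hJsat x (x.1, 0) hx (heq.refl x.1)
    have hJ₁id : IsRightIdeal R J₁ := by
      refine ⟨hJid.1, ?_, ?_⟩
      · intro x hx y hy
        have := hJid.2.1 _ hx _ hy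
        have h := hJsat _ _ this (heq.refl _)
        simp at h
        exact h
      · intro x hx s
        have := hJid.2.2 _ hx (s, 0)
        have h := hJsat _ _ this (heq.refl _)
        simp at h
        exact h
    have hJ₁sat : IsSaturated R σ J₁ := by
      intro s i hi hsi
      exact hJsat (s, 0) (i, 0) hi hsi
    have hsub₁ : zeroClass R σ ⊆ J₁ := by
      intro r hr
      exact (hmem (r, 0)).1 (hsub hr)
    rcases hmax J₁ hJ₁id hJ₁sat hsub₁ with hc | hc
    · left
      ext x
      rw [hmem x]
      exact (Set.ext_iff.mp hc x.1)
    · right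
      ext x
      simp only [Set.mem_univ, iff_true]
      rw [hmem x, hc]
      trivial

/-- Lift an m-regular congruence on `S` to `R × S` via the second component. -/
lemma lift_snd {σ : S → S → Prop} (h : IsMRegular S σ) :
    IsMRegular (R × S) (fun a b => σ a.2 b.2) := by
  obtain ⟨⟨heq, hadd, hmul⟩, ⟨e, he⟩, ⟨hz, haddI, hmulI⟩, hsat, hne, hmax⟩ := h
  refine ⟨⟨⟨fun a => heq.refl a.2, fun h => heq.symm h, fun h h' => heq.trans h h'⟩,
      fun a b c hab => by simpa using hadd a.2 b.2 c.2 hab,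
      fun a b c hab => by simpa using hmul a.2 b.2 c.2 hab⟩,
    ⟨(0, e), fun s => by simpa using he s.2⟩, ?_, ?_, ?_, ?_⟩
  · exact ⟨hz, fun x hx y hy => haddI x.2 hx y.2 hy, fun x hx s => hmulI x.2 hx s.2⟩
  · exact fun x i hi hxi => hsat x.2 i.2 hi hxi
  · intro hu
    apply hne
    ext s
    simp only [Set.mem_univ, iff_true]
    have : ((0 : R), s) ∈ (Set.univ : Set (R × S)) := Set.mem_univ _
    rw [← hu] at this
    exact this
  · intro J hJid hJsat hsub
    set J₁ : Set S := {s | ((0 : R), s) ∈ J} with hJ₁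
    have hmem : ∀ x : R × S, x ∈ J ↔ x.2 ∈ J₁ := by
      intro x
      constructor
      · intro hx
        exact hJsat (0, x.2) x hx (heq.refl x.2)
      · intro hx
        exact hJsat x (0, x.2) hx (heq.refl x.2)
    have hJ₁id : IsRightIdeal S J₁ := by
      refine ⟨hJid.1, ?_, ?_⟩
      · intro x hx y hy
        have := hJid.2.1 _ hx _ hy
        have h := hJsat _ _ this (heq.refl _)
        simp at h
        exact h
      · intro x hx s
        have := hJid.2.2 _ hx (0, s)
        have h := hJsat _ _ this (heq.refl _)
        simp at h
        exact h
    have hJ₁sat : IsSaturated S σ J₁ := by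
      intro s i hi hsi
      exact hJsat (0, s) (0, i) hi hsi
    have hsub₁ : zeroClass S σ ⊆ J₁ := by
      intro s hs
      exact (hmem (0, s)).1 (hsub hs)
    rcases hmax J₁ hJ₁id hJ₁sat hsub₁ with hc | hc
    · left
      ext x
      rw [hmem x]
      exact (Set.ext_iff.mp hc x.2)
    · right
      ext x
      simp only [Set.mem_univ, iff_true]
      rw [hmem x, hc]
      trivial

/-- Dichotomy: the zero class of an m-regular congruence on `R × S` contains
`R × {0}` or `{0} × S`. -/
lemma zero_dichotomy {ρ : R × S → R × S → Prop} (hρ : IsMRegular (R × S) ρ) :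
    (∀ r : R, ρ (r, 0) 0) ∨ (∀ s : S, ρ (0, s) 0) := by
  obtain ⟨⟨heq, hadd, hmul⟩, ⟨e, he⟩, hI, hsat, hne, hmax⟩ := hρ
  set I := zeroClass (R × S) ρ with hIdef
  set J : Set (R × S) := {x | ∃ i ∈ I, ∃ r : R, ρ x (i + (r, 0))} with hJdef
  have hJid : IsRightIdeal (R × S) J := by
    refine ⟨⟨0, hI.1, 0, by show ρ 0 (0 + 0); rw [add_zero]; exact heq.refl _⟩, ?_, ?_⟩
    · rintro x ⟨i, hi, r, hx⟩ y ⟨i', hi', r', hy⟩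
      refine ⟨i + i', hI.2.1 i hi i' hi', r + r', ?_⟩
      have h1 : ρ (x + y) (i + (r, 0) + y) := hadd _ _ _ hx
      have h2 : ρ (i + (r, 0) + y) (i + (r, 0) + (i' + (r', 0))) := by
        have := hadd _ _ (i + (r, 0)) hy
        rw [add_comm y, add_comm (i' + (r', 0))] at this
        exact this
      have h3 : i + (r, 0) + (i' + (r', 0)) = i + i' + (r + r', 0) := by
        have hrr : ((r, 0) : R × S) + (r', 0) = (r + r', 0) := by
          rw [Prod.mk_add_mk, add_zero]
        rw [add_add_add_comm, hrr]
      exact heq.trans h1 (h3 ▸ h2)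
    · rintro x ⟨i, hi, r, hx⟩ c
      refine ⟨i * c, hI.2.2 i hi c, r * c.1, ?_⟩
      have h1 : ρ (x * c) ((i + (r, 0)) * c) := hmul _ _ _ hx
      have h2 : (i + (r, 0)) * c = i * c + (r * c.1, 0) := by
        rw [add_mul]
        congr 1
        rw [show c = (c.1, c.2) from rfl, Prod.mk_mul_mk, zero_mul]
      exact h2 ▸ h1
  have hJsat : IsSaturated (R × S) ρ J := by
    rintro z x ⟨i, hi, r, hx⟩ hzx
    exact ⟨i, hi, r, heq.trans hzx hx⟩
  have hIJ : I ⊆ J := fun x hx => ⟨x, hx, 0, by show ρ x (x + 0); rw [add_zero]; exact heq.refl x⟩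
  rcases hmax J hJid hJsat hIJ with hc | hc
  · left
    intro r
    have : (r, (0 : S)) ∈ J := ⟨0, hI.1, r, by simpa using heq.refl ((r, 0) : R × S)⟩
    rw [hc] at this
    exact this
  · right
    intro s
    have he' : e ∈ J := by rw [hc]; trivial
    obtain ⟨i, hi, r, hei⟩ := he'
    have h1 : ρ (e * (0, s)) ((i + (r, 0)) * (0, s)) := hmul _ _ _ hei
    have h2 : (i + (r, 0)) * (0, s) = i * (0, s) := by
      have hr0 : ((r, 0) : R × S) * (0, s) = 0 := by
        rw [Prod.mk_mul_mk, mul_zero, zero_mul]; rfl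
      rw [add_mul, hr0, add_zero]
    have h3 : i * ((0 : R), s) ∈ I := hI.2.2 i hi _
    have h4 : ρ ((0 : R), s) (i * (0, s)) :=
      heq.trans (heq.symm (he (0, s))) (h2 ▸ h1)
    exact hsat _ _ h3 h4

/-- If `R × {0}` is in the zero class of an m-regular `ρ` on `R × S`, then
`ρ` descends to an m-regular congruence on `S`. -/
lemma descend_snd {ρ : R × S → R × S → Prop} (hρ : IsMRegular (R × S) ρ)
    (hR : ∀ r : R, ρ (r, 0) 0) :
    (∀ a : R × S, ρ a (0, a.2)) ∧ IsMRegular S (fun s t => ρ (0, s) (0, t)) := by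
  obtain ⟨⟨heq, hadd, hmul⟩, ⟨e, he⟩, hI, hsat, hne, hmax⟩ := hρ
  set I := zeroClass (R × S) ρ with hIdef
  have hfix : ∀ a : R × S, ρ a (0, a.2) := by
    intro a
    have h1 : ρ ((a.1, 0) + (0, a.2)) ((0 : R × S) + (0, a.2)) := hadd _ _ _ (hR a.1)
    simpa using h1
  refine ⟨hfix, ⟨⟨fun a => heq.refl _, fun h => heq.symm h, fun h h' => heq.trans h h'⟩,
      ?_, ?_⟩, ⟨e.2, ?_⟩, ?_, ?_, ?_, ?_⟩
  · intro a b c hab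
    have := hadd _ _ ((0 : R), c) hab
    simpa using this
  · intro a b c hab
    have := hmul _ _ ((0 : R), c) hab
    simpa using this
  · intro s
    have h1 := he ((0 : R), s)
    have h2 : e * ((0 : R), s) = ((0 : R), e.2 * s) := by
      rw [show e = (e.1, e.2) from rfl, Prod.mk_mul_mk, mul_zero]
    rw [h2] at h1
    exact h1
  · -- zeroClass is a right ideal
    refine ⟨?_, ?_, ?_⟩
    · exact hI.1
    · intro x hx y hy
      have := hI.2.1 ((0 : R), x) hx ((0 : R), y) hy
      simp at this
      exact this
    · intro x hx s
      have := hI.2.2 ((0 : R), x) hx ((0 : R), s)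
      simp [Prod.mk_mul_mk] at this
      exact this
  · intro s i hi hsi
    exact hsat ((0 : R), s) ((0 : R), i) hi hsi
  · intro hu
    apply hne
    ext x
    simp only [Set.mem_univ, iff_true]
    have hx2 : x.2 ∈ zeroClass S (fun s t => ρ (0, s) (0, t)) := by
      rw [hu]; trivial
    exact hsat x ((0 : R), x.2) hx2 (hfix x)
  · intro J' hJ'id hJ'sat hsub
    set Jh : Set (R × S) := {x | x.2 ∈ J'} with hJh
    have hJhid : IsRightIdeal (R × S) Jh := by
      refine ⟨hJ'id.1, fun x hx y hy => hJ'id.2.1 x.2 hx y.2 hy,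
        fun x hx c => hJ'id.2.2 x.2 hx c.2⟩
    have hJhsat : IsSaturated (R × S) ρ Jh := by
      intro x y hy hxy
      have : ρ ((0 : R), x.2) ((0 : R), y.2) :=
        heq.trans (heq.symm (hfix x)) (heq.trans hxy (hfix y))
      exact hJ'sat x.2 y.2 hy this
    have hsub' : I ⊆ Jh := by
      intro x hx
      have : ((0 : R), x.2) ∈ I := hsat ((0 : R), x.2) x hx (heq.symm (hfix x))
      exact hsub this
    rcases hmax Jh hJhid hJhsat hsub' with hc | hc
    · left
      ext s
      constructor
      · intro hs
        have : ((0 : R), s) ∈ Jh := hs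
        rw [hc] at this
        exact this
      · exact fun hs => hsub hs
    · right
      ext s
      simp only [Set.mem_univ, iff_true]
      have : ((0 : R), s) ∈ Jh := by rw [hc]; trivial
      exact this

/-- If `{0} × S` is in the zero class of an m-regular `ρ` on `R × S`, then
`ρ` descends to an m-regular congruence on `R`. -/
lemma descend_fst {ρ : R × S → R × S → Prop} (hρ : IsMRegular (R × S) ρ)
    (hS : ∀ s : S, ρ (0, s) 0) :
    (∀ a : R × S, ρ a (a.1, 0)) ∧ IsMRegular R (fun s t => ρ (s, 0) (t, 0)) := by
  obtain ⟨⟨heq, hadd, hmul⟩, ⟨e, he⟩, hI, hsat, hne, hmax⟩ := hρ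
  set I := zeroClass (R × S) ρ with hIdef
  have hfix : ∀ a : R × S, ρ a (a.1, 0) := by
    intro a
    have h1 : ρ ((0, a.2) + (a.1, 0)) ((0 : R × S) + (a.1, 0)) := hadd _ _ _ (hS a.2)
    simpa using h1
  refine ⟨hfix, ⟨⟨fun a => heq.refl _, fun h => heq.symm h, fun h h' => heq.trans h h'⟩,
      ?_, ?_⟩, ⟨e.1, ?_⟩, ?_, ?_, ?_, ?_⟩
  · intro a b c hab
    have := hadd _ _ (c, (0 : S)) hab
    simpa using this
  · intro a b c hab
    have := hmul _ _ (c, (0 : S)) hab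
    simpa using this
  · intro s
    have h1 := he (s, (0 : S))
    have h2 : e * (s, (0 : S)) = (e.1 * s, (0 : S)) := by
      rw [show e = (e.1, e.2) from rfl, Prod.mk_mul_mk, mul_zero]
    rw [h2] at h1
    exact h1
  · refine ⟨?_, ?_, ?_⟩
    · exact hI.1
    · intro x hx y hy
      have := hI.2.1 (x, (0 : S)) hx (y, (0 : S)) hy
      simp at this
      exact this
    · intro x hx s
      have := hI.2.2 (x, (0 : S)) hx (s, (0 : S))
      simp [Prod.mk_mul_mk] at this
      exact this
  · intro s i hi hsi
    exact hsat (s, (0 : S)) (i, (0 : S)) hi hsi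
  · intro hu
    apply hne
    ext x
    simp only [Set.mem_univ, iff_true]
    have hx1 : x.1 ∈ zeroClass R (fun s t => ρ (s, 0) (t, 0)) := by
      rw [hu]; trivial
    exact hsat x (x.1, (0 : S)) hx1 (hfix x)
  · intro J' hJ'id hJ'sat hsub
    set Jh : Set (R × S) := {x | x.1 ∈ J'} with hJh
    have hJhid : IsRightIdeal (R × S) Jh := by
      refine ⟨hJ'id.1, fun x hx y hy => hJ'id.2.1 x.1 hx y.1 hy,
        fun x hx c => hJ'id.2.2 x.1 hx c.1⟩
    have hJhsat : IsSaturated (R × S) ρ Jh := by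
      intro x y hy hxy
      have : ρ (x.1, (0 : S)) (y.1, (0 : S)) :=
        heq.trans (heq.symm (hfix x)) (heq.trans hxy (hfix y))
      exact hJ'sat x.1 y.1 hy this
    have hsub' : I ⊆ Jh := by
      intro x hx
      have : (x.1, (0 : S)) ∈ I := hsat (x.1, (0 : S)) x hx (heq.symm (hfix x))
      exact hsub this
    rcases hmax Jh hJhid hJhsat hsub' with hc | hc
    · left
      ext s
      constructor
      · intro hs
        have : (s, (0 : S)) ∈ Jh := hs
        rw [hc] at this
        exact this
      · exact fun hs => hsub hs
    · right
      ext s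
      simp only [Set.mem_univ, iff_true]
      have : (s, (0 : S)) ∈ Jh := by rw [hc]; trivial
      exact this

end Aux

/-- `rad_m(R × S) = rad_m(R) × rad_m(S)`. -/
theorem radm_prod {R S : Type u} [NonUnitalSemiring R] [NonUnitalSemiring S] :
    ∀ p q : R × S, radm (R × S) p q ↔ radm R p.1 q.1 ∧ radm S p.2 q.2 := by
  intro p q
  constructor
  · intro h
    exact ⟨fun σ hσ => h _ (lift_fst hσ), fun σ hσ => h _ (lift_snd hσ)⟩
  · rintro ⟨h1, h2⟩ ρ hρ
    have heqv := hρ.1.1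
    rcases zero_dichotomy hρ with hR | hS
    · obtain ⟨hfix, hm⟩ := descend_snd hρ hR
      have hst : ρ (0, p.2) (0, q.2) := h2 _ hm
      exact heqv.trans (hfix p) (heqv.trans hst (heqv.symm (hfix q)))
    · obtain ⟨hfix, hm⟩ := descend_fst hρ hS
      have hst : ρ (p.1, 0) (q.1, 0) := h1 _ hm
      exact heqv.trans (hfix p) (heqv.trans hst (heqv.symm (hfix q)))
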